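/- Let K be a field with |K| ≥ r+2 and characteristic ≠ 2, let s ≤ r ≤ min{m,n}, and define S to be the set of m×n matrices C over K with C_{i,j}=0 for i,j ∈ {1,…,s} with i>j, C_{i,i}=1 for i=1,…,s, and C_{i,j}=0 for i>r. Then S is an affine subspace of dimension r·n − s(s+1)/2, every matrix in S has rank between s and r, and both the minimum rank s and maximum rank r are attained on S. -/

import Mathlib

section aux
variable {K : Type*} [Field K] {m n : ℕ}

lemma aux_submatrix_rank_le {s t : ℕ} (A : Matrix (Fin m) (Fin n) K)
    (f : Fin s → Fin m) (g : Fin t → Fin n) : (A.submatrix f g).rank ≤ A.rank := by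
  classical
  have h1 : A.submatrix f g =
      (Matrix.of fun (i : Fin s) (k : Fin m) => if k = f i then (1:K) else 0) * A *
      (Matrix.of fun (l : Fin n) (j : Fin t) => if l = g j then (1:K) else 0) := by
    ext i j
    simp [Matrix.mul_apply, Finset.mul_sum, ite_mul, mul_ite, Finset.sum_ite_eq,
      Finset.sum_ite_eq']
  rw [h1]
  exact le_trans (Matrix.rank_mul_le_left _ _) (Matrix.rank_mul_le_right _ _)

lemma aux_rank_le (t : ℕ) (htm : t ≤ m) (A : Matrix (Fin m) (Fin n) K)
    (h : ∀ (i : Fin m) (j : Fin n), t ≤ (i:ℕ) → A i j = 0) : A.rank ≤ t := by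
  classical
  set B : Matrix (Fin t) (Fin n) K := A.submatrix (Fin.castLE htm) id with hB
  have h1 : A = (Matrix.of fun (i : Fin m) (k : Fin t) =>
      if (i:ℕ) = (k:ℕ) then (1:K) else 0) * B := by
    ext i j
    rw [Matrix.mul_apply]
    by_cases hi : (i:ℕ) < t
    · rw [Finset.sum_eq_single (⟨(i:ℕ), hi⟩ : Fin t)]
      · simp [hB]
      · intro k _ hk
        have : ¬ ((i:ℕ) = (k:ℕ)) := by
          intro he; apply hk; apply Fin.ext; simp [← he]
        simp [this]
      · simp
    · rw [h i j (le_of_not_gt hi), Finset.sum_eq_zero]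
      intro k _
      have : ¬ ((i:ℕ) = (k:ℕ)) := by
        have := k.2; omega
      simp [this]
  calc A.rank = _ := by rw [h1]
    _ ≤ B.rank := Matrix.rank_mul_le_right _ _
    _ ≤ Fintype.card (Fin t) := Matrix.rank_le_card_height _
    _ = t := Fintype.card_fin t

lemma aux_rank_ge (t : ℕ) (htm : t ≤ m) (hmn : m ≤ n) (A : Matrix (Fin m) (Fin n) K)
    (h0 : ∀ (i : Fin m) (j : Fin n), (i:ℕ) < t → (j:ℕ) < t → (j:ℕ) < (i:ℕ) → A i j = 0)
    (h1 : ∀ (i : Fin m) (j : Fin n), (i:ℕ) < t → (i:ℕ) = (j:ℕ) → A i j = 1) :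
    t ≤ A.rank := by
  classical
  set B : Matrix (Fin t) (Fin t) K :=
    A.submatrix (Fin.castLE htm) (Fin.castLE (htm.trans hmn)) with hB
  have hbt : B.BlockTriangular id := by
    intro i j hij
    exact h0 _ _ (by simp [i.2]) (by simpa using j.2) (by simpa using hij) --
  have hdet : B.det = 1 := by
    rw [Matrix.det_of_upperTriangular hbt]
    apply Finset.prod_eq_one
    intro i _
    exact h1 _ _ (by simp [i.2]) (by simp)
  have hunit : IsUnit B := by
    rw [Matrix.isUnit_iff_isUnit_det, hdet]; exact isUnit_one
  have := Matrix.rank_of_isUnit B hunit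
  rw [Fintype.card_fin] at this
  calc t = B.rank := this.symm
    _ ≤ A.rank := aux_submatrix_rank_le A _ _

lemma aux_rank_diag (t : ℕ) (htm : t ≤ m) (hmn : m ≤ n) :
    (Matrix.of fun (i : Fin m) (j : Fin n) =>
      if (i:ℕ) = (j:ℕ) ∧ (i:ℕ) < t then (1:K) else 0).rank = t := by
  apply le_antisymm
  · apply aux_rank_le t htm
    intro i j hi
    have : ¬ ((i:ℕ) = (j:ℕ) ∧ (i:ℕ) < t) := by omega
    simp [this]
  · apply aux_rank_ge t htm hmn
    · intro i j _ _ hji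
      have : ¬ ((i:ℕ) = (j:ℕ) ∧ (i:ℕ) < t) := by omega
      simp [this]
    · intro i j hi hij
      rw [Matrix.of_apply, if_pos ⟨hij, hi⟩]

end aux
lemma aux_sum_tri (s : ℕ) : 2 * (∑ i ∈ Finset.range s, (i + 1)) = s * (s + 1) := by
  induction s with
  | zero => simp
  | succ k ih => rw [Finset.sum_range_succ, Nat.mul_add, ih]; ring

lemma aux_sum_count (m n r s : ℕ) (hsr : s ≤ r) (hrm : r ≤ m) (hmn : m ≤ n)
    (g : ℕ → ℕ) (hg1 : ∀ i, i < s → g i = n - (i + 1))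
    (hg2 : ∀ i, s ≤ i → i < r → g i = n) (hg3 : ∀ i, r ≤ i → g i = 0) :
    ∑ i ∈ Finset.range m, g i = r * n - s * (s + 1) / 2 := by
  have hsn : s ≤ n := hsr.trans (hrm.trans hmn)
  have h1 : ∑ i ∈ Finset.range m, g i = ∑ i ∈ Finset.range r, g i := by
    rw [← Finset.sum_subset (Finset.range_subset_range.2 hrm)]
    intro i _ hi
    exact hg3 i (by simpa using hi)
  have h2 : (∑ i ∈ Finset.range s, g i) + ∑ i ∈ Finset.Ico s r, g i
      = ∑ i ∈ Finset.range r, g i := by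
    rw [Finset.range_eq_Ico, Finset.range_eq_Ico]
    exact Finset.sum_Ico_consecutive g (Nat.zero_le s) hsr
  have h3 : ∑ i ∈ Finset.Ico s r, g i = (r - s) * n := by
    have hc : ∑ i ∈ Finset.Ico s r, g i = ∑ _i ∈ Finset.Ico s r, n :=
      Finset.sum_congr rfl (fun i hi => by
        rw [Finset.mem_Ico] at hi
        exact hg2 i hi.1 hi.2)
    rw [hc, Finset.sum_const, Nat.card_Ico, smul_eq_mul]
  set t := ∑ i ∈ Finset.range s, (i + 1) with ht
  have h4 : (∑ i ∈ Finset.range s, g i) + t = s * n := by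
    rw [ht, ← Finset.sum_add_distrib]
    have hc : ∑ i ∈ Finset.range s, (g i + (i+1)) = ∑ _i ∈ Finset.range s, n :=
      Finset.sum_congr rfl (fun i hi => by
        rw [Finset.mem_range] at hi
        rw [hg1 i hi]
        omega)
    rw [hc, Finset.sum_const, Finset.card_range, smul_eq_mul]
  have h5 : 2 * t = s * (s + 1) := aux_sum_tri s
  have h6 : s * (s + 1) / 2 = t := by omega
  rw [h1, ← h2, h3, h6]
  have h7 : (r - s) * n = r * n - s * n := Nat.sub_mul r s n
  have h8 : s * n ≤ r * n := Nat.mul_le_mul_right n hsr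
  omega

open scoped Classical in
noncomputable def vanishSubmodule (K : Type*) [Field K] {m n : ℕ}
    (P : Fin m → Fin n → Prop) : Submodule K (Matrix (Fin m) (Fin n) K) where
  carrier := {X | ∀ i j, P i j → X i j = 0}
  add_mem' := fun {a b} ha hb i j h => by
    simp only [Matrix.add_apply, ha i j h, hb i j h, add_zero]
  zero_mem' := fun i j _ => rfl
  smul_mem' := fun c X hX i j h => by
    simp only [Matrix.smul_apply, hX i j h, smul_zero]

lemma mem_vanishSubmodule {K : Type*} [Field K] {m n : ℕ}
    {P : Fin m → Fin n → Prop} {X : Matrix (Fin m) (Fin n) K} :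
    X ∈ vanishSubmodule K P ↔ ∀ i j, P i j → X i j = 0 := Iff.rfl

open scoped Classical in
lemma finrank_vanishSubmodule (K : Type*) [Field K] {m n : ℕ}
    (P : Fin m → Fin n → Prop) :
    Module.finrank K (vanishSubmodule K P) =
      Nat.card {q : Fin m × Fin n // ¬ P q.1 q.2} := by
  classical
  have e : vanishSubmodule K P ≃ₗ[K] ({q : Fin m × Fin n // ¬ P q.1 q.2} → K) :=
    { toFun := fun X t => (X : Matrix (Fin m) (Fin n) K) t.1.1 t.1.2
      map_add' := fun X Y => rfl
      map_smul' := fun c X => rfl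
      invFun := fun f =>
        ⟨Matrix.of fun i j => if h : P i j then 0 else f ⟨(i, j), h⟩,
         fun i j h => by simp [h]⟩
      left_inv := fun X => by
        apply Subtype.ext
        ext i j
        by_cases h : P i j
        · simp [h, (X.2 i j h).symm]
        · simp [h]
      right_inv := fun f => by
        funext t
        obtain ⟨⟨i, j⟩, ht⟩ := t
        simp [ht] }
  rw [e.finrank_eq, Module.finrank_fintype_fun_eq_card]
  exact (Nat.card_eq_fintype_card).symm

lemma aux_card_lt {n a : ℕ} (ha : a ≤ n) :
    Nat.card {j : Fin n // (j:ℕ) < a} = a := by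
  have e : {j : Fin n // (j:ℕ) < a} ≃ Fin a :=
    { toFun := fun j => ⟨(j:ℕ), j.2⟩
      invFun := fun k => ⟨⟨(k:ℕ), lt_of_lt_of_le k.2 ha⟩, k.2⟩
      left_inv := fun j => by apply Subtype.ext; apply Fin.ext; rfl
      right_inv := fun k => by apply Fin.ext; rfl }
  rw [Nat.card_congr e]
  simp

lemma aux_card_gt {n a : ℕ} (ha : a ≤ n) :
    Nat.card {j : Fin n // a ≤ (j:ℕ)} = n - a := by
  have e : {j : Fin n // a ≤ (j:ℕ)} ≃ {j : Fin n // ¬ ((j:ℕ) < a)} :=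
    Equiv.subtypeEquivRight (fun j => by omega)
  rw [Nat.card_congr e, Nat.card_eq_fintype_card, Fintype.card_subtype_compl, Fintype.card_fin]
  have h := aux_card_lt (n := n) ha
  rw [Nat.card_eq_fintype_card] at h
  rw [h]

lemma aux_card_row (m n r s : ℕ) (hsr : s ≤ r) (hmn : m ≤ n) (i : Fin m) :
    Nat.card {j : Fin n // ¬ (((i:ℕ) < s ∧ (j:ℕ) ≤ (i:ℕ)) ∨ r ≤ (i:ℕ))} =
      (if (i:ℕ) < s then n - ((i:ℕ)+1) else if (i:ℕ) < r then n else 0) := by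
  have him : (i:ℕ) < m := i.2
  by_cases hi1 : (i:ℕ) < s
  · rw [if_pos hi1]
    have h : ∀ j : Fin n, (¬ (((i:ℕ) < s ∧ (j:ℕ) ≤ (i:ℕ)) ∨ r ≤ (i:ℕ))) ↔ ((i:ℕ)+1 ≤ (j:ℕ)) :=
      fun j => by omega
    rw [Nat.card_congr (Equiv.subtypeEquivRight h), aux_card_gt (show (i:ℕ)+1 ≤ n by omega)]
  · rw [if_neg hi1]
    by_cases hi2 : (i:ℕ) < r
    · rw [if_pos hi2]
      have h : ∀ j : Fin n, ¬ (((i:ℕ) < s ∧ (j:ℕ) ≤ (i:ℕ)) ∨ r ≤ (i:ℕ)) := fun j => by omega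
      rw [Nat.card_congr (Equiv.subtypeUnivEquiv h)]
      simp
    · rw [if_neg hi2]
      have : IsEmpty {j : Fin n // ¬ (((i:ℕ) < s ∧ (j:ℕ) ≤ (i:ℕ)) ∨ r ≤ (i:ℕ))} :=
        ⟨fun j => j.2 (Or.inr (le_of_not_gt hi2))⟩
      exact Nat.card_of_isEmpty

theorem stmt1 (K : Type*) [Field K] (m n r s : ℕ)
    (hK : (r + 2 : Cardinal) ≤ Cardinal.mk K) (hchar : ringChar K ≠ 2)
    (hsr : s ≤ r) (hrm : r ≤ m) (hmn : m ≤ n) :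
    ∃ S : AffineSubspace K (Matrix (Fin m) (Fin n) K),
      (S : Set (Matrix (Fin m) (Fin n) K)) =
        {C | (∀ (i : Fin m) (j : Fin n), (i : ℕ) < s → (j : ℕ) < s → (j : ℕ) < (i : ℕ) → C i j = 0) ∧
             (∀ (i : Fin m) (j : Fin n), (i : ℕ) < s → (i : ℕ) = (j : ℕ) → C i j = 1) ∧
             (∀ (i : Fin m) (j : Fin n), r ≤ (i : ℕ) → C i j = 0)} ∧
      Module.finrank K S.direction = r * n - s * (s + 1) / 2 ∧
      (∀ A ∈ S, s ≤ A.rank ∧ A.rank ≤ r) ∧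
      IsLeast {k : ℕ | ∃ A ∈ S, A.rank = k} s ∧
      IsGreatest {k : ℕ | ∃ A ∈ S, A.rank = k} r := by
  classical
  have hsm : s ≤ m := hsr.trans hrm
  set P : Fin m → Fin n → Prop :=
    fun i j => ((i:ℕ) < s ∧ (j:ℕ) ≤ (i:ℕ)) ∨ r ≤ (i:ℕ) with hPdef
  set W : Submodule K (Matrix (Fin m) (Fin n) K) := vanishSubmodule K P with hWdef
  set p : Matrix (Fin m) (Fin n) K :=
    Matrix.of fun i j => if (i:ℕ) = (j:ℕ) ∧ (i:ℕ) < s then (1:K) else 0 with hpdef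
  set q : Matrix (Fin m) (Fin n) K :=
    Matrix.of fun i j => if (i:ℕ) = (j:ℕ) ∧ (i:ℕ) < r then (1:K) else 0 with hqdef
  have hp : ∀ i j, p i j = if (i:ℕ) = (j:ℕ) ∧ (i:ℕ) < s then (1:K) else 0 := fun i j => rfl
  have hq : ∀ i j, q i j = if (i:ℕ) = (j:ℕ) ∧ (i:ℕ) < r then (1:K) else 0 := fun i j => rfl
  -- membership characterization
  have hmem : ∀ x : Matrix (Fin m) (Fin n) K, x ∈ AffineSubspace.mk' p W ↔
      ((∀ (i : Fin m) (j : Fin n), (i : ℕ) < s → (j : ℕ) < s → (j : ℕ) < (i : ℕ) → x i j = 0) ∧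
       (∀ (i : Fin m) (j : Fin n), (i : ℕ) < s → (i : ℕ) = (j : ℕ) → x i j = 1) ∧
       (∀ (i : Fin m) (j : Fin n), r ≤ (i : ℕ) → x i j = 0)) := by
    intro x
    rw [AffineSubspace.mem_mk', hWdef, mem_vanishSubmodule]
    constructor
    · intro hx
      have hx' : ∀ i j, P i j → x i j = p i j := by
        intro i j h
        have := hx i j h
        rw [vsub_eq_sub, Matrix.sub_apply, sub_eq_zero] at this
        exact this
      refine ⟨?_, ?_, ?_⟩
      · intro i j hi hj hji
        rw [hx' i j (Or.inl ⟨hi, le_of_lt hji⟩), hp, if_neg (by omega)]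
      · intro i j hi hij
        rw [hx' i j (Or.inl ⟨hi, le_of_eq hij.symm⟩), hp, if_pos ⟨hij, hi⟩]
      · intro i j hi
        rw [hx' i j (Or.inr hi), hp, if_neg (by omega)]
    · rintro ⟨h1, h2, h3⟩ i j h
      rw [vsub_eq_sub, Matrix.sub_apply, sub_eq_zero]
      rcases h with ⟨hi, hji⟩ | hi
      · rcases eq_or_lt_of_le hji with he | hl
        · rw [h2 i j hi he.symm, hp, if_pos ⟨he.symm, hi⟩]
        · rw [h1 i j hi (by omega) hl, hp, if_neg (by omega)]
      · rw [h3 i j hi, hp, if_neg (by omega)]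
  have hset : ((AffineSubspace.mk' p W : AffineSubspace K (Matrix (Fin m) (Fin n) K)) :
      Set (Matrix (Fin m) (Fin n) K)) =
      {C | (∀ (i : Fin m) (j : Fin n), (i : ℕ) < s → (j : ℕ) < s → (j : ℕ) < (i : ℕ) → C i j = 0) ∧
           (∀ (i : Fin m) (j : Fin n), (i : ℕ) < s → (i : ℕ) = (j : ℕ) → C i j = 1) ∧
           (∀ (i : Fin m) (j : Fin n), r ≤ (i : ℕ) → C i j = 0)} := by
    ext x
    rw [SetLike.mem_coe, hmem x]
    rfl
  -- rank bounds
  have hrank : ∀ A ∈ AffineSubspace.mk' p W, s ≤ A.rank ∧ A.rank ≤ r := by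
    intro A hA
    obtain ⟨h1, h2, h3⟩ := (hmem A).1 hA
    exact ⟨aux_rank_ge s hsm hmn A h1 h2, aux_rank_le r hrm A h3⟩
  -- p and q memberships and ranks
  have hpmem : p ∈ AffineSubspace.mk' p W := AffineSubspace.self_mem_mk' p W
  have hprank : p.rank = s := aux_rank_diag s hsm hmn
  have hqmem : q ∈ AffineSubspace.mk' p W := by
    rw [hmem]
    refine ⟨?_, ?_, ?_⟩
    · intro i j hi hj hji
      rw [hq, if_neg (by omega)]
    · intro i j hi hij
      rw [hq, if_pos ⟨hij, by omega⟩]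
    · intro i j hi
      rw [hq, if_neg (by omega)]
  have hqrank : q.rank = r := aux_rank_diag r hrm hmn
  refine ⟨AffineSubspace.mk' p W, hset, ?_, hrank, ?_, ?_⟩
  · -- dimension
    rw [AffineSubspace.direction_mk', hWdef, finrank_vanishSubmodule]
    set g : ℕ → ℕ := fun x => if x < s then n - (x+1) else if x < r then n else 0 with hg
    calc Nat.card {q : Fin m × Fin n // ¬ P q.1 q.2}
        = Nat.card ((i : Fin m) × {j : Fin n // ¬ P i j}) :=
          Nat.card_congr (Equiv.subtypeProdEquivSigmaSubtype (fun (i : Fin m) (j : Fin n) => ¬ P i j))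
      _ = ∑ i : Fin m, g (i:ℕ) := by
          rw [Nat.card_eq_fintype_card, Fintype.card_sigma]
          refine Finset.sum_congr rfl (fun i _ => ?_)
          have h := aux_card_row m n r s hsr hmn i
          rw [Nat.card_eq_fintype_card] at h
          rw [h, hg]
      _ = ∑ i ∈ Finset.range m, g i := Fin.sum_univ_eq_sum_range g m
      _ = r * n - s * (s + 1) / 2 := by
          apply aux_sum_count m n r s hsr hrm hmn
          · intro i hi; rw [hg]; simp only [if_pos hi]
          · intro i hi1 hi2; rw [hg]; simp only [if_neg (by omega : ¬ i < s), if_pos hi2]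
          · intro i hi
            rw [hg]
            simp only [if_neg (by omega : ¬ i < s), if_neg (by omega : ¬ i < r)]
  · exact ⟨⟨p, hpmem, hprank⟩, by rintro k ⟨A, hA, rfl⟩; exact (hrank A hA).1⟩
  · exact ⟨⟨q, hqmem, hqrank⟩, by rintro k ⟨A, hA, rfl⟩; exact (hrank A hA).2⟩
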